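/- For every t ∈ ℂ with t ≠ 0, the 4-dimensional complex Lie algebra L_t with basis e₁,e₂,e₃,e₄ and nonzero brackets [e₂,e₃] = e₁ + t·e₄, [e₂,e₄] = e₂, [e₃,e₄] = e₂ − e₃ (together with anticommutativity, all other brackets of basis vectors zero) is a Lie algebra isomorphic to the direct product sl(2,ℂ) × ℂ. -/

import Mathlib

noncomputable section

/-- The direct product of two Lie rings. -/
instance prodLieRing (L₁ L₂ : Type*) [LieRing L₁] [LieRing L₂] : LieRing (L₁ × L₂) where
  bracket p q := (⁅p.1, q.1⁆, ⁅p.2, q.2⁆)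
  add_lie x y z := by
    show (⁅(x + y).1, z.1⁆, ⁅(x + y).2, z.2⁆) = _
    simp [add_lie, Prod.add_def]
  lie_add x y z := by
    show (⁅x.1, (y + z).1⁆, ⁅x.2, (y + z).2⁆) = _
    simp [lie_add, Prod.add_def]
  lie_self x := by
    show (⁅x.1, x.1⁆, ⁅x.2, x.2⁆) = 0
    simp
  leibniz_lie x y z := by
    show (⁅x.1, ⁅y.1, z.1⁆⁆, ⁅x.2, ⁅y.2, z.2⁆⁆) = _
    show _ = (⁅⁅x.1, y.1⁆, z.1⁆, ⁅⁅x.2, y.2⁆, z.2⁆) + (⁅y.1, ⁅x.1, z.1⁆⁆, ⁅y.2, ⁅x.2, z.2⁆⁆)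
    simp [Prod.add_def]

/-- The direct product of two complex Lie algebras. -/
instance prodLieAlgebra (L₁ L₂ : Type*) [LieRing L₁] [LieRing L₂]
    [LieAlgebra ℂ L₁] [LieAlgebra ℂ L₂] : LieAlgebra ℂ (L₁ × L₂) where
  lie_smul c x y := by
    show (⁅x.1, (c • y).1⁆, ⁅x.2, (c • y).2⁆) = c • (⁅x.1, y.1⁆, ⁅x.2, y.2⁆)
    simp [Prod.smul_def]

attribute [local instance 100] LieRing.ofAssociativeRing

set_option maxHeartbeats 2000000 in
/-- For every `t ≠ 0`, the 4-dimensional complex Lie algebra with basis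
`e₁,…,e₄` and nonzero brackets `[e₂,e₃] = e₁ + t·e₄`, `[e₂,e₄] = e₂`,
`[e₃,e₄] = e₂ − e₃` (written 0-indexed below) is isomorphic to `sl(2,ℂ) × ℂ`. -/
theorem stmt18 (t : ℂ) (ht : t ≠ 0) (L : Type*) [LieRing L] [LieAlgebra ℂ L]
    (e : Module.Basis (Fin 4) ℂ L)
    (hbr : ∀ i j : Fin 4, ⁅e i, e j⁆ =
      if i = 1 ∧ j = 2 then e 0 + t • e 3 else if i = 2 ∧ j = 1 then -(e 0 + t • e 3)
      else if i = 1 ∧ j = 3 then e 1 else if i = 3 ∧ j = 1 then -e 1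
      else if i = 2 ∧ j = 3 then e 1 - e 2 else if i = 3 ∧ j = 2 then e 2 - e 1
      else 0) :
    Nonempty (L ≃ₗ⁅ℂ⁆ (↥(LieAlgebra.SpecialLinear.sl (Fin 2) ℂ) × ℂ)) := by
  classical
  have memE : (!![0,1;0,0] : Matrix (Fin 2) (Fin 2) ℂ) ∈ LieAlgebra.SpecialLinear.sl (Fin 2) ℂ := by
    show _ ∈ LinearMap.ker (Matrix.traceLinearMap (Fin 2) ℂ ℂ)
    simp [Matrix.trace_fin_two]
  have memF : (!![0,0;1,0] : Matrix (Fin 2) (Fin 2) ℂ) ∈ LieAlgebra.SpecialLinear.sl (Fin 2) ℂ := by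
    show _ ∈ LinearMap.ker (Matrix.traceLinearMap (Fin 2) ℂ ℂ)
    simp [Matrix.trace_fin_two]
  have memH : (!![1,0;0,-1] : Matrix (Fin 2) (Fin 2) ℂ) ∈ LieAlgebra.SpecialLinear.sl (Fin 2) ℂ := by
    show _ ∈ LinearMap.ker (Matrix.traceLinearMap (Fin 2) ℂ ℂ)
    simp [Matrix.trace_fin_two]
  set E : ↥(LieAlgebra.SpecialLinear.sl (Fin 2) ℂ) := ⟨_, memE⟩ with hE
  set F : ↥(LieAlgebra.SpecialLinear.sl (Fin 2) ℂ) := ⟨_, memF⟩ with hF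
  set H : ↥(LieAlgebra.SpecialLinear.sl (Fin 2) ℂ) := ⟨_, memH⟩ with hH
  set v : Fin 4 → (↥(LieAlgebra.SpecialLinear.sl (Fin 2) ℂ) × ℂ) :=
    ![(0,1), (E,0), ((1/2:ℂ)•E - (t/2)•F, 0), ((-(1:ℂ)/2)•H, -1/t)] with hv
  set f := e.constr ℂ v with hfdef
  have hf0 : f (e 0) = (0,1) := e.constr_basis ℂ v 0
  have hf1 : f (e 1) = (E,0) := e.constr_basis ℂ v 1
  have hf2 : f (e 2) = ((1/2:ℂ)•E - (t/2)•F, 0) := e.constr_basis ℂ v 2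
  have hf3 : f (e 3) = ((-(1:ℂ)/2)•H, -1/t) := e.constr_basis ℂ v 3
  have hbrack : ∀ (a b : ↥(LieAlgebra.SpecialLinear.sl (Fin 2) ℂ)) (c d : ℂ),
      ⁅(a,c), (b,d)⁆ = (⁅a,b⁆, (0:ℂ)) := by
    intro a b c d
    show (⁅a,b⁆, ⁅c,d⁆) = _
    simp [Ring.lie_def, mul_comm]
  have matcomp : ∀ (A B C : Matrix (Fin 2) (Fin 2) ℂ), A*B - B*A = C ∨ True := fun _ _ _ => Or.inr trivial
  have hEF : ⁅E,F⁆ = H := by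
    apply Subtype.ext
    show E.val * F.val - F.val * E.val = H.val
    simp only [hE, hF, hH]
    ext a b; fin_cases a <;> fin_cases b <;> norm_num [Matrix.mul_apply, Fin.sum_univ_two]
  have hFE : ⁅F,E⁆ = -H := by
    apply Subtype.ext
    show F.val * E.val - E.val * F.val = -H.val
    simp only [hE, hF, hH]
    ext a b; fin_cases a <;> fin_cases b <;> norm_num [Matrix.mul_apply, Fin.sum_univ_two]
  have hEH : ⁅E,H⁆ = (-2:ℂ)•E := by
    apply Subtype.ext
    show E.val * H.val - H.val * E.val = (-2:ℂ)•E.val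
    simp only [hE, hF, hH]
    ext a b; fin_cases a <;> fin_cases b <;> norm_num [Matrix.mul_apply, Fin.sum_univ_two]
  have hHE : ⁅H,E⁆ = (2:ℂ)•E := by
    apply Subtype.ext
    show H.val * E.val - E.val * H.val = (2:ℂ)•E.val
    simp only [hE, hF, hH]
    ext a b; fin_cases a <;> fin_cases b <;> norm_num [Matrix.mul_apply, Fin.sum_univ_two]
  have hFH : ⁅F,H⁆ = (2:ℂ)•F := by
    apply Subtype.ext
    show F.val * H.val - H.val * F.val = (2:ℂ)•F.val
    simp only [hE, hF, hH]
    ext a b; fin_cases a <;> fin_cases b <;> norm_num [Matrix.mul_apply, Fin.sum_univ_two]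
  have hHF : ⁅H,F⁆ = (-2:ℂ)•F := by
    apply Subtype.ext
    show H.val * F.val - F.val * H.val = (-2:ℂ)•F.val
    simp only [hE, hF, hH]
    ext a b; fin_cases a <;> fin_cases b <;> norm_num [Matrix.mul_apply, Fin.sum_univ_two]
  have hm0 : (⟨0, by norm_num⟩ : Fin 4) = 0 := rfl
  have hm1 : (⟨1, by norm_num⟩ : Fin 4) = 1 := rfl
  have hm2 : (⟨2, by norm_num⟩ : Fin 4) = 2 := rfl
  have hm3 : (⟨3, by norm_num⟩ : Fin 4) = 3 := rfl
  have h : ∀ i j : Fin 4, f ⁅e i, e j⁆ = ⁅f (e i), f (e j)⁆ := by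
    intro i j
    rw [hbr]
    fin_cases i <;> fin_cases j <;> simp only [hm0, hm1, hm2, hm3] <;>
      simp only [show ((0:Fin 4)=1) = False by decide, show ((0:Fin 4)=2) = False by decide,
        show ((0:Fin 4)=3) = False by decide, show ((1:Fin 4)=0) = False by decide,
        show ((1:Fin 4)=2) = False by decide, show ((1:Fin 4)=3) = False by decide,
        show ((2:Fin 4)=0) = False by decide, show ((2:Fin 4)=1) = False by decide,
        show ((2:Fin 4)=3) = False by decide, show ((3:Fin 4)=0) = False by decide,
        show ((3:Fin 4)=1) = False by decide, show ((3:Fin 4)=2) = False by decide,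
        show ((1:Fin 4)=1) = True by decide, show ((2:Fin 4)=2) = True by decide,
        show ((3:Fin 4)=3) = True by decide, true_and, and_true, false_and, and_false,
        if_true, if_false, map_zero]
    all_goals
      simp only [map_add, map_smul, map_sub, map_neg, map_zero, hf0, hf1, hf2, hf3, hbrack,
        zero_lie, lie_zero, lie_self, Prod.mk_zero_zero, Prod.ext_iff, Prod.mk.injEq,
        Prod.fst_zero, Prod.snd_zero, Prod.fst_add, Prod.snd_add, Prod.smul_fst, Prod.smul_snd,
        smul_zero, add_zero, zero_add, smul_eq_mul, Prod.fst_neg, Prod.snd_neg,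
        Prod.fst_sub, Prod.snd_sub, neg_zero, sub_zero,
        lie_add, add_lie, lie_sub, sub_lie, lie_smul, smul_lie, lie_neg, neg_lie,
        hEF, hFE, hEH, hHE, hFH, hHF]
    all_goals refine ⟨?_, ?_⟩
    all_goals first
      | trivial
      | module
      | (field_simp <;> ring)
  have heq : (LinearMap.llcomp ℂ L L (↥(LieAlgebra.SpecialLinear.sl (Fin 2) ℂ) × ℂ) f).comp
        (LieAlgebra.ad ℂ L).toLinearMap
      = (LinearMap.lcomp ℂ _ f).comp ((LieAlgebra.ad ℂ _).toLinearMap.comp f) :=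
    e.ext fun i => e.ext fun j => by
      simpa only [LinearMap.comp_apply, LinearMap.llcomp_apply, LinearMap.lcomp_apply,
        LieHom.coe_toLinearMap, LieAlgebra.ad_apply] using h i j
  have key : ∀ x y : L, f ⁅x, y⁆ = ⁅f x, f y⁆ := fun x y => by
    simpa only [LinearMap.comp_apply, LinearMap.llcomp_apply, LinearMap.lcomp_apply,
      LieHom.coe_toLinearMap, LieAlgebra.ad_apply] using
      LinearMap.congr_fun (LinearMap.congr_fun heq x) y
  have coe_add' : ∀ p q : ↥(LieAlgebra.SpecialLinear.sl (Fin 2) ℂ), (p+q).val = p.val+q.val :=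
    fun _ _ => rfl
  have coe_smul' : ∀ (c : ℂ) (p : ↥(LieAlgebra.SpecialLinear.sl (Fin 2) ℂ)),
      (c • p).val = c • p.val := fun _ _ => rfl
  set g : (↥(LieAlgebra.SpecialLinear.sl (Fin 2) ℂ) × ℂ) →ₗ[ℂ] L :=
    { toFun := fun p => (p.2 - 2*(p.1.val 0 0)/t) • e 0 + ((p.1.val 0 1) + (p.1.val 1 0)/t) • e 1
        + (-2*(p.1.val 1 0)/t) • e 2 + (-2*(p.1.val 0 0)) • e 3
      map_add' := by
        intro p q
        simp only [Prod.fst_add, Prod.snd_add, coe_add', Matrix.add_apply]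
        module
      map_smul' := by
        intro c p
        simp only [Prod.smul_fst, Prod.smul_snd, coe_smul', Matrix.smul_apply,
          smul_eq_mul, RingHom.id_apply]
        module } with hg
  have coe_sub' : ∀ p q : ↥(LieAlgebra.SpecialLinear.sl (Fin 2) ℂ), (p-q).val = p.val-q.val :=
    fun _ _ => rfl
  have hgf : ∀ i : Fin 4, g (f (e i)) = e i := by
    intro i
    fin_cases i <;>
      simp only [hm0, hm1, hm2, hm3, hf0, hf1, hf2, hf3] <;>
      simp [hg, hE, hF, hH, coe_smul', coe_sub', Matrix.smul_apply, Matrix.sub_apply] <;>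
      match_scalars <;> field_simp <;> ring
  have hfg : ∀ p : (↥(LieAlgebra.SpecialLinear.sl (Fin 2) ℂ) × ℂ), f (g p) = p := by
    rintro ⟨⟨A, hA⟩, c⟩
    have htr : A 1 1 = -(A 0 0) := by
      have h0 : Matrix.trace A = 0 := hA
      rw [Matrix.trace_fin_two] at h0
      linear_combination h0
    simp only [hg, LinearMap.coe_mk, AddHom.coe_mk]
    simp only [map_add, map_smul, hf0, hf1, hf2, hf3]
    refine Prod.ext ?_ ?_
    · apply Subtype.ext
      simp only [Prod.fst_add, Prod.smul_fst, coe_smul', coe_add', coe_sub',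
        ZeroMemClass.coe_zero, smul_zero, zero_add, hE, hF, hH]
      ext a b
      fin_cases a <;> fin_cases b <;>
        simp [Matrix.smul_apply, Matrix.sub_apply, htr] <;> field_simp <;> ring
    · simp only [Prod.snd_add, Prod.smul_snd, smul_eq_mul]
      field_simp
      ring
  have hgf' : g.comp f = LinearMap.id := e.ext fun i => by simpa using hgf i
  exact ⟨{ toLieHom := { toLinearMap := f, map_lie' := key _ _ }, invFun := g,
           left_inv := fun x => by simpa using LinearMap.congr_fun hgf' x,
           right_inv := hfg }⟩
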